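/- Let (R, 𝔪, k) be a commutative noetherian local Cohen–Macaulay ring admitting a dualizing module. Then every R-module M has a preenvelope with respect to the class of weak balanced big CM R-modules: there exists a homomorphism φ : M → W with W weak balanced big CM such that every homomorphism φ' : M → W' with W' weak balanced big CM factors as φ' = ψ ∘ φ for some ψ : W → W'. -/

import Mathlib

open CategoryTheory IsLocalRing

universe u
/-- A system of parameters of a noetherian local ring `R`: a list of `dim R` elements
of the maximal ideal generating an ideal modulo which `R` has Krull dimension `0`. -/
def IsSystemOfParameters (R : Type u) [CommRing R] [IsLocalRing R] (xs : List R) : Prop :=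
  (∀ x ∈ xs, x ∈ maximalIdeal R) ∧
  (xs.length : WithBot (WithTop ℕ)) = ringKrullDim R ∧
  ringKrullDim (R ⧸ Ideal.span {x | x ∈ xs}) = 0

/-- A local ring is Cohen--Macaulay if every system of parameters is an `R`-regular sequence. -/
def IsCohenMacaulayLocalRing (R : Type u) [CommRing R] [IsLocalRing R] : Prop :=
  ∀ xs : List R, IsSystemOfParameters R xs → RingTheory.Sequence.IsRegular R xs

/-- An `R`-module `M` is weak balanced big Cohen--Macaulay if every system of parameters
of `R` is a weak `M`-regular sequence. -/
def IsWeakBalancedBigCM (R : Type u) [CommRing R] [IsLocalRing R]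
    (M : Type u) [AddCommGroup M] [Module R M] : Prop :=
  ∀ xs : List R, IsSystemOfParameters R xs → RingTheory.Sequence.IsWeaklyRegular M xs

/-- `Ext^i_R(X, Y)` vanishes. -/
def ExtVanishes (R : Type u) [CommRing R] (i : ℕ) (X Y : Type u)
    [AddCommGroup X] [Module R X] [AddCommGroup Y] [Module R Y] : Prop :=
  Subsingleton (((Ext R (ModuleCat.{u} R) i).obj
    (Opposite.op (ModuleCat.of R X))).obj (ModuleCat.of R Y))


/-- A dualizing module: finitely generated, of finite injective dimension (expressed by
vanishing of `Ext^i(-, Ω)` for all sufficiently large `i`), with `Ext^i(Ω, Ω) = 0` for `i > 0`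
and such that the canonical map `R → Hom_R(Ω, Ω)`, `r ↦ r • id`, is bijective. -/
def IsDualizingModule (R : Type u) [CommRing R] (Ω : Type u)
    [AddCommGroup Ω] [Module R Ω] : Prop :=
  Module.Finite R Ω ∧
  (∃ n : ℕ, ∀ i > n, ∀ (N : Type u) (_ : AddCommGroup N) (_ : Module R N),
    ExtVanishes R i N Ω) ∧
  (∀ i > 0, ExtVanishes R i Ω Ω) ∧
  Function.Bijective (fun r : R => (r • LinearMap.id : Ω →ₗ[R] Ω))



section Aux
open Submodule RingTheory.Sequence Pointwise

variable {R : Type u} [CommRing R]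

lemma mem_pointwise_smul_top_iff {M : Type*} [AddCommGroup M] [Module R M] (y : R) (m : M) :
    m ∈ (y • ⊤ : Submodule R M) ↔ ∃ n, y • n = m := by
  constructor
  · intro h
    obtain ⟨n, -, hn⟩ := Set.mem_smul_set.mp
      (by rw [← Submodule.coe_pointwise_smul]; exact h : m ∈ y • ((⊤ : Submodule R M) : Set M))
    exact ⟨n, hn⟩
  · rintro ⟨n, rfl⟩
    exact Submodule.smul_mem_pointwise_smul n y ⊤ trivial

lemma mem_ofList_smul_pi {J : Type*} {W : J → Type*} [∀ j, AddCommGroup (W j)]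
    [∀ j, Module R (W j)] (ys : List R) (f : ∀ j, W j) :
    f ∈ (Ideal.ofList ys • ⊤ : Submodule R (∀ j, W j)) ↔
      ∀ j, f j ∈ (Ideal.ofList ys • ⊤ : Submodule R (W j)) := by
  constructor
  · intro h j
    exact Submodule.smul_top_le_comap_smul_top (Ideal.ofList ys) (LinearMap.proj j) h
  · induction ys generalizing f with
    | nil =>
      intro h
      simp only [Ideal.ofList_nil, bot_smul, Submodule.mem_bot] at h ⊢
      funext j; exact h j
    | cons y ys ih =>
      intro h
      simp only [Ideal.ofList_cons_smul] at h ⊢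
      have h' : ∀ j, ∃ a, (∃ n : W j, y • n = a) ∧ ∃ b ∈ (Ideal.ofList ys • ⊤ : Submodule R (W j)),
          a + b = f j := by
        intro j
        obtain ⟨a, ha, b, hb, hab⟩ := Submodule.mem_sup.mp (h j)
        exact ⟨a, (mem_pointwise_smul_top_iff y a).mp ha, b, hb, hab⟩
      choose a ha b hb hab using h'
      choose g hg using ha
      have : f = (y • g) + b := by
        funext j
        rw [← hab j, ← hg j]; rfl
      rw [this]
      refine Submodule.add_mem_sup ?_ (ih b hb)
      exact Submodule.smul_mem_pointwise_smul g y ⊤ trivial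

lemma isWeaklyRegular_pi {J : Type*} {W : J → Type*} [∀ j, AddCommGroup (W j)]
    [∀ j, Module R (W j)] (rs : List R)
    (h : ∀ j, IsWeaklyRegular (W j) rs) : IsWeaklyRegular (∀ j, W j) rs := by
  rw [isWeaklyRegular_iff]
  intro i hi
  rw [isSMulRegular_quotient_iff_mem_of_smul_mem]
  intro f hf
  rw [mem_ofList_smul_pi] at hf ⊢
  intro j
  exact mem_of_isSMulRegular_quotient_of_smul_mem ((h j).regular_mod_prev i hi) (hf j)

lemma isWeaklyRegular_submodule {W : Type*} [AddCommGroup W] [Module R W]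
    {N : Submodule R W} (rs : List R) (hW : IsWeaklyRegular W rs)
    (hcl : ∀ ys : List R, (Ideal.ofList ys • ⊤ : Submodule R W) ⊓ N ≤ Ideal.ofList ys • N) :
    IsWeaklyRegular N rs := by
  rw [isWeaklyRegular_iff]
  intro i hi
  rw [isSMulRegular_quotient_iff_mem_of_smul_mem]
  have key : ∀ m : N, m ∈ (Ideal.ofList (rs.take i) • ⊤ : Submodule R N) ↔
      (m : W) ∈ Ideal.ofList (rs.take i) • N := by
    intro m
    constructor
    · intro hm
      have := Submodule.mem_map_of_mem (f := N.subtype) hm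
      rwa [Submodule.map_smul'', Submodule.map_top, Submodule.range_subtype] at this
    · intro hm
      have : (m : W) ∈ Submodule.map N.subtype (Ideal.ofList (rs.take i) • ⊤) := by
        rwa [Submodule.map_smul'', Submodule.map_top, Submodule.range_subtype]
      obtain ⟨m', hm', hmm⟩ := this
      exact (Subtype.ext hmm : m' = m) ▸ hm'
  intro n hn
  rw [key] at hn ⊢
  have hn' : rs[i] • (n : W) ∈ Ideal.ofList (rs.take i) • N := by
    simpa using hn
  have h1 : rs[i] • (n : W) ∈ (Ideal.ofList (rs.take i) • ⊤ : Submodule R W) :=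
    smul_mono_right (Ideal.ofList (rs.take i)) (le_top : N ≤ ⊤) hn'
  have h2 : (n : W) ∈ (Ideal.ofList (rs.take i) • ⊤ : Submodule R W) :=
    mem_of_isSMulRegular_quotient_of_smul_mem (hW.regular_mod_prev i hi) h1
  exact hcl (rs.take i) ⟨h2, n.2⟩

lemma exists_finset_smul_span {W' : Type*} [AddCommGroup W'] [Module R W'] (ys : List R) (p : W')
    (h : p ∈ (Ideal.ofList ys • ⊤ : Submodule R W')) :
    ∃ t : Finset W', p ∈ Ideal.ofList ys • (Submodule.span R (t : Set W')) := by
  classical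
  induction ys generalizing p with
  | nil =>
    refine ⟨∅, ?_⟩
    simp only [Ideal.ofList_nil, bot_smul, Submodule.mem_bot] at h ⊢
    exact h
  | cons y ys ih =>
    rw [Ideal.ofList_cons_smul] at h
    obtain ⟨a, ha, b, hb, rfl⟩ := Submodule.mem_sup.mp h
    obtain ⟨g, rfl⟩ := (mem_pointwise_smul_top_iff y a).mp ha
    obtain ⟨t, ht⟩ := ih b hb
    refine ⟨insert g t, ?_⟩
    rw [Ideal.ofList_cons_smul]
    refine Submodule.add_mem_sup ?_
      (smul_mono_right (Ideal.ofList ys)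
        (Submodule.span_mono (by simp [Set.subset_insert] : (t : Set W') ⊆ _)) ht)
    exact Submodule.smul_mem_pointwise_smul _ _ _ (Submodule.subset_span (by simp))


open Submodule RingTheory.Sequence Pointwise Cardinal

lemma mk_finset_le' (β : Type u) : #(Finset β) ≤ max ℵ₀ (Cardinal.mk β) := by
  calc #(Finset β) ≤ #(Multiset β) := mk_le_of_injective Finset.val_injective
    _ ≤ #(List β) := mk_le_of_surjective (fun m => Quot.inductionOn m fun l => ⟨l, rfl⟩)
    _ ≤ max ℵ₀ (Cardinal.mk β) := mk_list_le_max β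

lemma mk_finsupp_le' (α : Type u) (R : Type u) [Zero R] :
    #(α →₀ R) ≤ max (max (Cardinal.mk α) (Cardinal.mk R)) ℵ₀ := by
  calc #(α →₀ R) ≤ #(Finset (α × R)) := mk_le_of_injective (Finsupp.graph_injective α R)
    _ ≤ max ℵ₀ #(α × R) := mk_finset_le' _
    _ = max ℵ₀ ((Cardinal.mk α) * (Cardinal.mk R)) := by rw [mk_prod, lift_id, lift_id]
    _ ≤ max ℵ₀ (max (max (Cardinal.mk α) (Cardinal.mk R)) ℵ₀) := max_le_max_left _ (mul_le_max _ _)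
    _ ≤ max (max (Cardinal.mk α) (Cardinal.mk R)) ℵ₀ := by
        apply max_le (le_max_right _ _) le_rfl



variable {R : Type u} [CommRing R]

open scoped Classical in
variable (R) in
noncomputable def witSet {W' : Type u} [AddCommGroup W'] [Module R W'] (G : Set W')
    (c : ↥G →₀ R) (ys : List R) : Set W' :=
  if h : (Finsupp.linearCombination R ((↑) : ↥G → W')) c ∈ (Ideal.ofList ys • ⊤ : Submodule R W')
  then (((exists_finset_smul_span ys _ h).choose : Finset W') : Set W') else ∅

variable (R) in
noncomputable def stepSet {W' : Type u} [AddCommGroup W'] [Module R W'] (G : Set W') : Set W' :=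
  G ∪ ⋃ (c : ↥G →₀ R), ⋃ (ys : List R), witSet R G c ys

variable (R) in
noncomputable def chainSet {W' : Type u} [AddCommGroup W'] [Module R W'] (S₀ : Set W') :
    ℕ → Set W'
  | 0 => S₀
  | k+1 => stepSet R (chainSet S₀ k)

lemma witSet_finite {W' : Type u} [AddCommGroup W'] [Module R W'] (G : Set W')
    (c : ↥G →₀ R) (ys : List R) : (witSet R G c ys).Finite := by
  rw [witSet]
  split
  · exact Finset.finite_toSet _
  · exact Set.finite_empty

lemma stepSet_closure {W' : Type u} [AddCommGroup W'] [Module R W'] {G : Set W'} {w : W'}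
    {ys : List R} (hw : w ∈ Submodule.span R G)
    (hw2 : w ∈ (Ideal.ofList ys • ⊤ : Submodule R W')) :
    w ∈ Ideal.ofList ys • Submodule.span R (stepSet R G) := by
  have : w ∈ LinearMap.range (Finsupp.linearCombination R ((↑) : ↥G → W')) := by
    rw [Finsupp.range_linearCombination, Subtype.range_coe_subtype]
    exact hw
  obtain ⟨c, hc⟩ := this
  subst hc
  set p := (Finsupp.linearCombination R ((↑) : ↥G → W')) c with hp
  have hspec := (exists_finset_smul_span ys p hw2).choose_spec
  refine smul_mono_right (Ideal.ofList ys)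
    (Submodule.span_mono (?_ : (((exists_finset_smul_span ys p hw2).choose : Finset W') : Set W')
      ⊆ stepSet R G)) hspec
  intro x hx
  refine Set.mem_union_right _ (Set.mem_iUnion.mpr ⟨c, Set.mem_iUnion.mpr ⟨ys, ?_⟩⟩)
  rw [witSet, dif_pos hw2]
  exact hx

lemma exists_closure {W' : Type u} [AddCommGroup W'] [Module R W'] (S₀ : Set W') :
    ∃ Gs : Set W', S₀ ⊆ Gs ∧
      (Cardinal.mk Gs) ≤ max (max (Cardinal.mk S₀) (Cardinal.mk R)) ℵ₀ ∧
      ∀ ys : List R, (Ideal.ofList ys • ⊤ : Submodule R W') ⊓ Submodule.span R Gs ≤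
        Ideal.ofList ys • Submodule.span R Gs := by
  set κ := max (max (Cardinal.mk S₀) (Cardinal.mk R)) ℵ₀ with hκ
  have hℵκ : ℵ₀ ≤ κ := le_max_right _ _
  have hRκ : (Cardinal.mk R) ≤ κ := le_trans (le_max_right _ _) (le_max_left _ _)
  set G : ℕ → Set W' := chainSet R S₀ with hG
  have hmono : Monotone G := monotone_nat_of_le_succ fun k => Set.subset_union_left
  refine ⟨⋃ k, G k, Set.subset_iUnion G 0, ?_, ?_⟩
  · -- cardinality
    have hcard : ∀ k, #(G k) ≤ κ := by
      intro k
      induction k with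
      | zero => exact le_trans (le_max_left _ _) (le_max_left _ _)
      | succ k ih =>
        have h1 : #(↥(G k) →₀ R) ≤ κ :=
          le_trans (mk_finsupp_le' _ _) (max_le (max_le ih hRκ) hℵκ)
        have h2 : #(⋃ (c : ↥(G k) →₀ R), ⋃ (ys : List R), witSet R (G k) c ys) ≤ κ := by
          refine le_trans (mk_iUnion_le _) ?_
          have hin : ∀ c : ↥(G k) →₀ R,
              #(⋃ (ys : List R), witSet R (G k) c ys) ≤ κ := by
            intro c
            refine le_trans (mk_iUnion_le _) ?_
            have : ∀ ys : List R, #(witSet R (G k) c ys) ≤ κ := fun ys =>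
              le_trans (@Cardinal.mk_le_aleph0 ↥(witSet R (G k) c ys)
                ((witSet_finite _ _ _).countable)) hℵκ
            refine le_trans (mul_le_mul' (le_trans (mk_list_le_max R) (max_le hℵκ hRκ))
              (ciSup_le this)) ?_
            exact le_trans (mul_le_max _ _) (max_le (max_le le_rfl le_rfl) hℵκ)
          refine le_trans (mul_le_mul' h1 (ciSup_le hin)) ?_
          exact le_trans (mul_le_max _ _) (max_le (max_le le_rfl le_rfl) hℵκ)
        calc #(G (k+1)) = #(G k ∪ ⋃ (c : ↥(G k) →₀ R), ⋃ (ys : List R), witSet R (G k) c ys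
            : Set W') := rfl
          _ ≤ #(G k) + _ := mk_union_le _ _
          _ ≤ κ := le_trans (add_le_max _ _) (max_le (max_le ih h2) hℵκ)
    have h0 := mk_iUnion_le_lift G
    rw [Cardinal.lift_uzero] at h0
    refine le_trans h0 ?_
    have hl1 : Cardinal.lift.{u} #ℕ = ℵ₀ := by simp
    have hl2 : (⨆ k, Cardinal.lift.{0} #(G k)) ≤ κ := ciSup_le fun k => by
      rw [Cardinal.lift_uzero]; exact hcard k
    refine le_trans (mul_le_mul' (le_of_eq hl1) hl2) ?_
    exact le_trans (mul_le_max _ _) (max_le (max_le hℵκ le_rfl) hℵκ)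
  · -- closure
    intro ys w hw
    obtain ⟨hw1, hw2⟩ := hw
    rw [Submodule.span_iUnion] at hw2
    obtain ⟨k, hk⟩ := (Submodule.mem_iSup_of_directed _
      ((monotone_nat_of_le_succ fun k => Submodule.span_mono
        (hmono (Nat.le_succ k))).directed_le)).mp hw2
    have hst := stepSet_closure (R := R) hk hw1
    have hG1 : G (k+1) = stepSet R (G k) := rfl
    rw [Submodule.span_iUnion]
    have hle : Submodule.span R (stepSet R (G k)) ≤ ⨆ k, Submodule.span R (G k) := by
      rw [← hG1]
      exact le_iSup_of_le (k+1) le_rfl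
    exact smul_mono_right (Ideal.ofList ys) hle hst

/-- **Theorem D (preenvelopes).** Over a Cohen--Macaulay noetherian local ring with a dualizing
module, every module has a preenvelope with respect to the class of weak balanced big CM
modules. -/
theorem exists_weakBalancedBigCM_preenvelope
    (R : Type u) [CommRing R] [IsNoetherianRing R] [IsLocalRing R]
    (hCM : IsCohenMacaulayLocalRing R)
    (Ω : Type u) [AddCommGroup Ω] [Module R Ω] (hΩ : IsDualizingModule R Ω)
    (M : Type u) [AddCommGroup M] [Module R M] :
    ∃ (W : Type u) (_ : AddCommGroup W) (_ : Module R W) (_ : IsWeakBalancedBigCM R W)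
      (φ : M →ₗ[R] W),
      ∀ (W' : Type u) (_ : AddCommGroup W') (_ : Module R W'), IsWeakBalancedBigCM R W' →
        ∀ φ' : M →ₗ[R] W', ∃ ψ : W →ₗ[R] W', ψ ∘ₗ φ = φ' := by
  classical
  set T := M × (List R × ℕ) with hT
  set F := M × (T →₀ R) with hF
  set S : Set (Submodule R F) := {K | IsWeakBalancedBigCM R (F ⧸ K)} with hSdef
  haveI : Nonempty M := ⟨0⟩
  let W₀ : Type u := ∀ K : S, F ⧸ (K : Submodule R F)
  letI iG : AddCommGroup W₀ := Pi.addCommGroup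
  letI iM : Module R W₀ := Pi.module _ _ _
  let φ₀ : M →ₗ[R] W₀ :=
    LinearMap.pi (fun K : S => (K : Submodule R F).mkQ ∘ₗ LinearMap.inl R M (T →₀ R))
  refine ⟨W₀, iG, iM, ?_, φ₀, ?_⟩
  · intro xs hxs
    exact isWeaklyRegular_pi xs fun K : S => K.2 xs hxs
  · intro W' instW1 instW2 hW' φ'
    obtain ⟨Gs, hS₀Gs, hGscard, hGscl⟩ := exists_closure (R := R) (Set.range φ')
    set N := Submodule.span R Gs with hN
    have hMT : (Cardinal.mk M) ≤ (Cardinal.mk T) := mk_le_of_injective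
      (f := fun m => ((m, ([], 0)) : T)) (fun a b h => congrArg Prod.fst h)
    have hRT : (Cardinal.mk R) ≤ (Cardinal.mk T) := mk_le_of_injective
      (f := fun r => ((0, ([r], 0)) : T)) (fun a b h => by
        have := congrArg (fun p : T => p.2.1) h
        simpa using this)
    have hℵT : ℵ₀ ≤ (Cardinal.mk T) := by
      haveI : Infinite T := by
        rw [hT]
        haveI : Nonempty (List R) := ⟨[]⟩
        infer_instance
      exact Cardinal.aleph0_le_mk T
    have hGsT : (Cardinal.mk Gs) ≤ (Cardinal.mk T) :=
      hGscard.trans (max_le (max_le ((mk_range_le).trans hMT) hRT) hℵT)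
    obtain ⟨emb⟩ := Cardinal.le_def _ _ |>.mp hGsT
    set g : T → W' := fun t =>
      if h : ∃ s : ↥Gs, emb s = t then ((Classical.choose h : ↥Gs) : W') else 0 with hg
    have hgmem : ∀ t, g t ∈ N := by
      intro t
      rw [hg]
      dsimp only
      split
      · rename_i h
        exact Submodule.subset_span (Classical.choose h).2
      · exact N.zero_mem
    have hGsg : Gs ⊆ Set.range g := by
      intro x hx
      refine ⟨emb ⟨x, hx⟩, ?_⟩
      rw [hg]
      dsimp only
      rw [dif_pos ⟨⟨x, hx⟩, rfl⟩]
      have hcs := Classical.choose_spec (⟨⟨x, hx⟩, rfl⟩ : ∃ s : ↥Gs, emb s = emb ⟨x, hx⟩)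
      have : Classical.choose (⟨⟨x, hx⟩, rfl⟩ : ∃ s : ↥Gs, emb s = emb ⟨x, hx⟩) = ⟨x, hx⟩ :=
        emb.injective hcs
      rw [this]
    set ρ : F →ₗ[R] W' := LinearMap.coprod φ' (Finsupp.linearCombination R g) with hρ
    have hrange : LinearMap.range ρ = N := by
      rw [hρ, LinearMap.range_coprod, Finsupp.range_linearCombination]
      apply le_antisymm
      · refine sup_le ?_ ?_
        · rintro x ⟨m, rfl⟩
          exact Submodule.subset_span (hS₀Gs ⟨m, rfl⟩)
        · refine Submodule.span_le.mpr ?_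
          rintro x ⟨t, rfl⟩
          exact hgmem t
      · exact le_trans (Submodule.span_mono hGsg) le_sup_right
    have hNreg : ∀ xs : List R, IsSystemOfParameters R xs → IsWeaklyRegular N xs :=
      fun xs hxs => isWeaklyRegular_submodule xs (hW' xs hxs) hGscl
    have e : (F ⧸ LinearMap.ker ρ) ≃ₗ[R] N :=
      ρ.quotKerEquivRange ≪≫ₗ LinearEquiv.ofEq _ _ hrange
    have hK : LinearMap.ker ρ ∈ S := by
      intro xs hxs
      exact (e.isWeaklyRegular_congr xs).mpr (hNreg xs hxs)
    refine ⟨(Submodule.liftQ (LinearMap.ker ρ) ρ le_rfl) ∘ₗ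
      (LinearMap.proj (⟨LinearMap.ker ρ, hK⟩ : S) : W₀ →ₗ[R] _), ?_⟩
    apply LinearMap.ext
    intro m
    show Submodule.liftQ (LinearMap.ker ρ) ρ le_rfl
      ((LinearMap.ker ρ).mkQ (LinearMap.inl R M (T →₀ R) m)) = φ' m
    rw [Submodule.mkQ_apply, Submodule.liftQ_apply]
    show φ' m + (Finsupp.linearCombination R g) 0 = φ' m
    rw [map_zero, add_zero]
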